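/- With hypotheses as above (χ = 1, 0 < w_j, Σ w_j = 1, each partial sum Σ_{j=1}^i w_j a non-integer in (0,1), and χ_i in the open interval (Σ_{j=1}^i w_j - Σ_{j=1}^{i-1} χ_j + 2(i-1), Σ_{j=1}^i w_j - Σ_{j=1}^{i-1} χ_j + 2i) for i ≤ N-1): for every t with 1 ≤ t ≤ N-1, the partial sum Σ_{j=1}^t χ_j is either 2t or 2t-1; in particular Σ_{j=1}^t χ_j ≤ 2t. -/
import Mathlib


open Finset

/-- With χ = 1, positive weights summing to 1 with non-integral partial sums, and
the Teixidor i Bigas inequalities, each partial sum `Σ_{j=1}^t χ_j` (for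
`1 ≤ t ≤ N-1`) equals `2t` or `2t-1`; in particular it is at most `2t`. -/
theorem stmt_3 (N : ℕ) (hN : 2 ≤ N) (w : ℕ → ℚ) (hw : ∀ j ∈ Icc 1 N, 0 < w j)
    (hsum : ∑ j ∈ Icc 1 N, w j = 1)
    (hni : ∀ i ∈ Icc 1 (N - 1), ¬ ∃ m : ℤ, (∑ j ∈ Icc 1 i, w j) = (m : ℚ))
    (c : ℕ → ℤ)
    (hineq : ∀ i ∈ Icc 1 (N - 1),
      (∑ j ∈ Icc 1 i, w j) - (∑ j ∈ Icc 1 (i - 1), (c j : ℚ)) + 2 * ((i : ℚ) - 1)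
          < (c i : ℚ) ∧
      (c i : ℚ) < (∑ j ∈ Icc 1 i, w j) - (∑ j ∈ Icc 1 (i - 1), (c j : ℚ)) + 2 * (i : ℚ)) :
    ∀ t, 1 ≤ t → t ≤ N - 1 →
      ((∑ j ∈ Icc 1 t, c j = 2 * (t : ℤ) ∨ ∑ j ∈ Icc 1 t, c j = 2 * (t : ℤ) - 1) ∧
        ∑ j ∈ Icc 1 t, c j ≤ 2 * (t : ℤ)) := by
  intro t ht1 ht2
  obtain ⟨h1, h2⟩ := hineq t (mem_Icc.mpr ⟨ht1, ht2⟩)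
  have htN : t < N := by omega
  have hsplit : ∑ j ∈ Icc 1 t, c j = (∑ j ∈ Icc 1 (t - 1), c j) + c t := by
    have h : t = (t - 1) + 1 := by omega
    rw [h, Finset.sum_Icc_succ_top (by omega)]
    simp
  have hWpos : 0 < ∑ j ∈ Icc 1 t, w j := by
    apply Finset.sum_pos
    · intro j hj
      rw [mem_Icc] at hj
      exact hw j (mem_Icc.mpr ⟨hj.1, by omega⟩)
    · exact ⟨1, mem_Icc.mpr ⟨le_refl 1, ht1⟩⟩
  have hWlt : (∑ j ∈ Icc 1 t, w j) < 1 := by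
    have hunion : Icc 1 t ∪ Ioc t N = Icc 1 N := by
      ext a; simp only [mem_union, mem_Icc, mem_Ioc]; omega
    have hdisj : Disjoint (Icc 1 t) (Ioc t N) := by
      rw [Finset.disjoint_left]
      intro a ha hb
      rw [mem_Icc] at ha; rw [mem_Ioc] at hb; omega
    have hsu := Finset.sum_union hdisj (f := w)
    rw [hunion, hsum] at hsu
    have hpos2 : 0 < ∑ j ∈ Ioc t N, w j := by
      apply Finset.sum_pos
      · intro j hj
        rw [mem_Ioc] at hj
        exact hw j (mem_Icc.mpr ⟨by omega, hj.2⟩)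
      · exact ⟨N, mem_Ioc.mpr ⟨htN, le_refl N⟩⟩
    linarith
  have hS : ((∑ j ∈ Icc 1 t, c j : ℤ) : ℚ)
      = (∑ j ∈ Icc 1 (t - 1), (c j : ℚ)) + (c t : ℚ) := by
    rw [hsplit]; push_cast; ring
  have hlow : (2 * (t : ℚ) - 2) < ((∑ j ∈ Icc 1 t, c j : ℤ) : ℚ) := by
    rw [hS]; linarith
  have hhigh : ((∑ j ∈ Icc 1 t, c j : ℤ) : ℚ) < 2 * (t : ℚ) + 1 := by
    rw [hS]; linarith
  have hlZ : 2 * (t : ℤ) - 2 < ∑ j ∈ Icc 1 t, c j := by exact_mod_cast hlow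
  have hhZ : (∑ j ∈ Icc 1 t, c j) < 2 * (t : ℤ) + 1 := by exact_mod_cast hhigh
  omega
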